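/- Let a, b : ℝ → ℝ be integrable functions with compact support, and define m : ℝ² → ℝ by m(x) = (1/(2π)) ∫₀^{2π} a(⟨x, u_θ⟩) · b(⟨x, v_θ⟩) dθ. Then m is integrable on ℝ² and ∫_{ℝ²} m(x) dx = (∫_ℝ a(t) dt) · (∫_ℝ b(s) ds). -/

import Mathlib

open MeasureTheory Real RealInnerProductSpace

/-- The unit vector u_θ = (cos θ, sin θ) in ℝ². -/
noncomputable def uVec (θ : ℝ) : EuclideanSpace ℝ (Fin 2) :=
  (WithLp.equiv 2 (Fin 2 → ℝ)).symm ![Real.cos θ, Real.sin θ]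

/-- The unit vector v_θ = u_{θ+π/2} = (−sin θ, cos θ) in ℝ². -/
noncomputable def vVec (θ : ℝ) : EuclideanSpace ℝ (Fin 2) :=
  (WithLp.equiv 2 (Fin 2 → ℝ)).symm ![-Real.sin θ, Real.cos θ]

/-- The radialization η²(x) = (1/(2π)) ∫₀^{2π} η(⟨x,u_θ⟩) η(⟨x,v_θ⟩) dθ. -/
noncomputable def radialization (η : ℝ → ℝ) (x : EuclideanSpace ℝ (Fin 2)) : ℝ :=
  (1 / (2 * π)) * ∫ θ in (0:ℝ)..(2 * π), η ⟪x, uVec θ⟫ * η ⟪x, vVec θ⟫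

/-- The mixed radialization of two one-variable functions a, b. -/
noncomputable def radialization2 (a b : ℝ → ℝ) (x : EuclideanSpace ℝ (Fin 2)) : ℝ :=
  (1 / (2 * π)) * ∫ θ in (0:ℝ)..(2 * π), a ⟪x, uVec θ⟫ * b ⟪x, vVec θ⟫

/- ## Auxiliary material -/

lemma orth_uv (θ : ℝ) : Orthonormal ℝ ![uVec θ, vVec θ] := by
  rw [orthonormal_iff_ite]
  intro i j
  fin_cases i <;> fin_cases j <;>
    simp [uVec, vVec, PiLp.inner_apply, Fin.sum_univ_two, EuclideanSpace.norm_eq] <;>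
    ring_nf <;> (try simp [sin_sq_add_cos_sq, cos_sq_add_sin_sq])

/-- The orthonormal basis (u_θ, v_θ) of ℝ². -/
noncomputable def rotB (θ : ℝ) : OrthonormalBasis (Fin 2) ℝ (EuclideanSpace ℝ (Fin 2)) :=
  OrthonormalBasis.mk (orth_uv θ)
    (ge_of_eq ((orth_uv θ).linearIndependent.span_eq_top_of_card_eq_finrank (by simp)))

/-- The measurable equivalence ℝ² ≃ᵐ ℝ × ℝ sending x to (⟪x,u_θ⟫, ⟪x,v_θ⟫). -/
noncomputable def Tmap (θ : ℝ) : EuclideanSpace ℝ (Fin 2) ≃ᵐ ℝ × ℝ :=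
  ((rotB θ).repr.toHomeomorph.toMeasurableEquiv).trans
    ((MeasurableEquiv.toLp 2 (Fin 2 → ℝ)).symm.trans (MeasurableEquiv.finTwoArrow))

lemma Tmap_apply (θ : ℝ) (x : EuclideanSpace ℝ (Fin 2)) :
    Tmap θ x = (⟪x, uVec θ⟫, ⟪x, vVec θ⟫) := by
  have h0 : (rotB θ).repr x 0 = ⟪x, uVec θ⟫ := by
    rw [OrthonormalBasis.repr_apply_apply, real_inner_comm]
    simp [rotB, OrthonormalBasis.coe_mk]
  have h1 : (rotB θ).repr x 1 = ⟪x, vVec θ⟫ := by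
    rw [OrthonormalBasis.repr_apply_apply, real_inner_comm]
    simp [rotB, OrthonormalBasis.coe_mk]
  simp [Tmap, MeasurableEquiv.trans_apply, MeasurableEquiv.finTwoArrow,
    MeasurableEquiv.toLp_symm_apply, h0, h1]

lemma Tmap_mp (θ : ℝ) : MeasurePreserving (Tmap θ) volume volume := by
  have h := ((volume_preserving_finTwoArrow ℝ).comp
      (EuclideanSpace.volume_preserving_symm_measurableEquiv_toLp (Fin 2))).comp
      ((rotB θ).repr.measurePreserving)
  exact h

/-- Per-angle rotation lemma: for fixed θ, the map x ↦ f(⟪x,u_θ⟫) g(⟪x,v_θ⟫) is integrable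
with integral (∫f)(∫g). -/
lemma rot_integral (θ : ℝ) (f g : ℝ → ℝ) (hf : Integrable f volume) (hg : Integrable g volume) :
    Integrable (fun x : EuclideanSpace ℝ (Fin 2) => f ⟪x, uVec θ⟫ * g ⟪x, vVec θ⟫) volume ∧
    ∫ x : EuclideanSpace ℝ (Fin 2), f ⟪x, uVec θ⟫ * g ⟪x, vVec θ⟫ =
      (∫ t, f t) * (∫ s, g s) := by
  have hfg : Integrable (fun p : ℝ × ℝ => f p.1 * g p.2) volume := by
    rw [Measure.volume_eq_prod]; exact hf.mul_prod hg
  have key : (fun x : EuclideanSpace ℝ (Fin 2) => f ⟪x, uVec θ⟫ * g ⟪x, vVec θ⟫) =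
      (fun p : ℝ × ℝ => f p.1 * g p.2) ∘ (Tmap θ) := by
    funext x; simp [Function.comp, Tmap_apply]
  constructor
  · rw [key]
    exact ((Tmap_mp θ).integrable_comp_emb (Tmap θ).measurableEmbedding).2 hfg
  · have h2 := (Tmap_mp θ).integral_comp (Tmap θ).measurableEmbedding
      (fun p : ℝ × ℝ => f p.1 * g p.2)
    rw [key, Function.comp_def]
    exact h2.trans (by rw [Measure.volume_eq_prod, integral_prod_mul])

lemma continuous_uVec : Continuous uVec := by
  have h : Continuous fun θ : ℝ => (![Real.cos θ, Real.sin θ] : Fin 2 → ℝ) := by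
    apply continuous_pi; intro i; fin_cases i <;> simp <;> fun_prop
  exact (PiLp.continuous_toLp 2 (fun _ : Fin 2 => ℝ)).comp h

lemma continuous_vVec : Continuous vVec := by
  have h : Continuous fun θ : ℝ => (![-Real.sin θ, Real.cos θ] : Fin 2 → ℝ) := by
    apply continuous_pi; intro i; fin_cases i <;> simp <;> fun_prop
  exact (PiLp.continuous_toLp 2 (fun _ : Fin 2 => ℝ)).comp h

lemma continuous_inner_uVec :
    Continuous fun p : ℝ × EuclideanSpace ℝ (Fin 2) => ⟪p.2, uVec p.1⟫ :=
  continuous_snd.inner (continuous_uVec.comp continuous_fst)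

lemma continuous_inner_vVec :
    Continuous fun p : ℝ × EuclideanSpace ℝ (Fin 2) => ⟪p.2, vVec p.1⟫ :=
  continuous_snd.inner (continuous_vVec.comp continuous_fst)

/-- Pulling back a null set of ℝ along x ↦ ⟪x,u_θ⟫ or x ↦ ⟪x,v_θ⟫ gives a null set. -/
lemma slice_null (θ : ℝ) {N : Set ℝ} (hNm : MeasurableSet N) (hN : volume N = 0) :
    volume {x : EuclideanSpace ℝ (Fin 2) | ⟪x, uVec θ⟫ ∈ N ∨ ⟪x, vVec θ⟫ ∈ N} = 0 := by
  have hset : {x : EuclideanSpace ℝ (Fin 2) | ⟪x, uVec θ⟫ ∈ N ∨ ⟪x, vVec θ⟫ ∈ N} =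
      Tmap θ ⁻¹' ((N ×ˢ Set.univ) ∪ (Set.univ ×ˢ N)) := by
    ext x
    simp [Tmap_apply]
  rw [hset, (Tmap_mp θ).measure_preimage
      (((hNm.prod MeasurableSet.univ).union (MeasurableSet.univ.prod hNm)).nullMeasurableSet)]
  refine le_antisymm ?_ zero_le
  refine le_trans (measure_union_le _ _) ?_
  rw [Measure.volume_eq_prod, Measure.prod_prod, Measure.prod_prod, hN]
  simp

/-- for compactly supported integrable a, b : ℝ → ℝ, the mixed radialization
m(x) = (1/(2π)) ∫₀^{2π} a(⟨x,u_θ⟩) b(⟨x,v_θ⟩) dθ is integrable on ℝ² and its integral is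
the product of the integrals of a and b. -/
theorem integral_radialization2 (a b : ℝ → ℝ)
    (hai : Integrable a volume) (hbi : Integrable b volume)
    (hac : HasCompactSupport a) (hbc : HasCompactSupport b) :
    Integrable (radialization2 a b) (volume : Measure (EuclideanSpace ℝ (Fin 2))) ∧
      ∫ x : EuclideanSpace ℝ (Fin 2), radialization2 a b x =
        (∫ t : ℝ, a t) * (∫ s : ℝ, b s) := by
  classical
  -- strongly measurable representatives
  set a' := hai.1.mk a with ha'def
  set b' := hbi.1.mk b with hb'def
  have ha'm : StronglyMeasurable a' := hai.1.stronglyMeasurable_mk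
  have hb'm : StronglyMeasurable b' := hbi.1.stronglyMeasurable_mk
  have haa : a =ᵐ[volume] a' := hai.1.ae_eq_mk
  have hbb : b =ᵐ[volume] b' := hbi.1.ae_eq_mk
  have hai' : Integrable a' volume := hai.congr haa
  have hbi' : Integrable b' volume := hbi.congr hbb
  -- the bad set
  set N : Set ℝ := toMeasurable volume ({t | a t ≠ a' t} ∪ {t | b t ≠ b' t}) with hNdef
  have hNm : MeasurableSet N := measurableSet_toMeasurable _ _
  have hN0 : volume N = 0 := by
    rw [measure_toMeasurable]
    refine le_antisymm (le_trans (measure_union_le _ _) ?_) zero_le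
    have h1 : volume {t | a t ≠ a' t} = 0 := haa
    have h2 : volume {t | b t ≠ b' t} = 0 := hbb
    rw [h1, h2]; simp
  have hsubN : ({t | a t ≠ a' t} ∪ {t | b t ≠ b' t}) ⊆ N := subset_toMeasurable _ _
  -- the bad set in the product space and its nullity
  set S : Set (ℝ × EuclideanSpace ℝ (Fin 2)) :=
    {p | ⟪p.2, uVec p.1⟫ ∈ N ∨ ⟪p.2, vVec p.1⟫ ∈ N} with hSdef
  have hSm : MeasurableSet S :=
    ((continuous_inner_uVec.measurable hNm).union (continuous_inner_vVec.measurable hNm))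
  have hS0 : (volume.prod (volume : Measure (EuclideanSpace ℝ (Fin 2)))) S = 0 := by
    rw [Measure.measure_prod_null hSm]
    filter_upwards with θ
    exact slice_null θ hNm hN0
  -- for a.e. x, for a.e. θ, (θ, x) ∉ S
  have hswap : ∀ᵐ x ∂(volume : Measure (EuclideanSpace ℝ (Fin 2))),
      ∀ᵐ θ ∂(volume : Measure ℝ), (θ, x) ∉ S := by
    have hmap : ((volume : Measure (EuclideanSpace ℝ (Fin 2))).prod volume)
        (Prod.swap ⁻¹' S) = 0 := by
      rw [← Measure.prod_swap, Measure.map_apply measurable_swap hSm] at hS0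
      exact hS0
    have := (Measure.measure_prod_null (μ := (volume : Measure (EuclideanSpace ℝ (Fin 2))))
      (ν := (volume : Measure ℝ)) (hSm.preimage measurable_swap)).1 hmap
    filter_upwards [this] with x hx
    exact (measure_eq_zero_iff_ae_notMem (s := Prod.mk x ⁻¹' Prod.swap ⁻¹' S)).1 hx
  -- radialization2 a b = radialization2 a' b' a.e.
  have hradeq : radialization2 a b =ᵐ[(volume : Measure (EuclideanSpace ℝ (Fin 2)))]
      radialization2 a' b' := by
    filter_upwards [hswap] with x hx
    unfold radialization2
    congr 1
    apply intervalIntegral.integral_congr_ae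
    filter_upwards [hx] with θ hθ _
    have hu : ⟪x, uVec θ⟫ ∉ N ∧ ⟪x, vVec θ⟫ ∉ N := by
      refine ⟨fun h => hθ (Or.inl h), fun h => hθ (Or.inr h)⟩
    have hau : a ⟪x, uVec θ⟫ = a' ⟪x, uVec θ⟫ := by
      by_contra h
      exact hu.1 (hsubN (Or.inl h))
    have hbv : b ⟪x, vVec θ⟫ = b' ⟪x, vVec θ⟫ := by
      by_contra h
      exact hu.2 (hsubN (Or.inr h))
    rw [hau, hbv]
  -- main computation with measurable representatives
  set μI : Measure ℝ := volume.restrict (Set.Ioc 0 (2 * π)) with hμIdef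
  set F : ℝ × EuclideanSpace ℝ (Fin 2) → ℝ :=
    fun p => a' ⟪p.2, uVec p.1⟫ * b' ⟪p.2, vVec p.1⟫ with hFdef
  have hFm : AEStronglyMeasurable F (μI.prod volume) :=
    ((ha'm.comp_measurable continuous_inner_uVec.measurable).mul
      (hb'm.comp_measurable continuous_inner_vVec.measurable)).aestronglyMeasurable
  have hslice : ∀ θ : ℝ, Integrable (fun x : EuclideanSpace ℝ (Fin 2) => F (θ, x)) volume :=
    fun θ => (rot_integral θ a' b' hai' hbi').1
  have hnormval : ∀ θ : ℝ, ∫ x : EuclideanSpace ℝ (Fin 2), ‖F (θ, x)‖ =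
      (∫ t, |a' t|) * (∫ s, |b' s|) := by
    intro θ
    have := (rot_integral θ (fun t => |a' t|) (fun s => |b' s|) hai'.abs hbi'.abs).2
    rw [← this]
    congr 1
    funext x
    simp [hFdef, abs_mul]
  have hFi : Integrable F (μI.prod volume) := by
    rw [integrable_prod_iff hFm]
    refine ⟨Filter.Eventually.of_forall fun θ => hslice θ, ?_⟩
    have : (fun θ : ℝ => ∫ x : EuclideanSpace ℝ (Fin 2), ‖F (θ, x)‖) =
        fun _ : ℝ => (∫ t, |a' t|) * (∫ s, |b' s|) := funext hnormval
    rw [this]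
    exact integrable_const _
  -- express radialization2 a' b' via the product integral
  have hrad' : radialization2 a' b' = fun x : EuclideanSpace ℝ (Fin 2) =>
      (1 / (2 * π)) * ∫ θ, F (θ, x) ∂μI := by
    funext x
    unfold radialization2
    rw [intervalIntegral.integral_of_le (by positivity : (0:ℝ) ≤ 2 * π)]
  have hint' : Integrable (radialization2 a' b')
      (volume : Measure (EuclideanSpace ℝ (Fin 2))) := by
    rw [hrad']
    exact (hFi.integral_prod_right).const_mul _
  have hval' : ∫ x : EuclideanSpace ℝ (Fin 2), radialization2 a' b' x =
      (∫ t : ℝ, a' t) * (∫ s : ℝ, b' s) := by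
    rw [hrad', integral_const_mul]
    have hswapint : ∫ x : EuclideanSpace ℝ (Fin 2), ∫ θ, F (θ, x) ∂μI =
        ∫ θ, (∫ x : EuclideanSpace ℝ (Fin 2), F (θ, x)) ∂μI :=
      (integral_integral_swap (f := fun θ x => F (θ, x)) hFi).symm
    rw [hswapint]
    have hconst : ∀ θ : ℝ, ∫ x : EuclideanSpace ℝ (Fin 2), F (θ, x) =
        (∫ t, a' t) * (∫ s, b' s) := fun θ => (rot_integral θ a' b' hai' hbi').2
    rw [show (fun θ : ℝ => ∫ x : EuclideanSpace ℝ (Fin 2), F (θ, x)) =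
        fun _ : ℝ => (∫ t, a' t) * (∫ s, b' s) from funext hconst]
    rw [hμIdef, setIntegral_const, Real.volume_real_Ioc_of_le (by positivity : (0:ℝ) ≤ 2 * π), smul_eq_mul, sub_zero]
    rw [← mul_assoc]
    rw [one_div, inv_mul_cancel₀ (by positivity : (2 * π : ℝ) ≠ 0), one_mul]
  refine ⟨hint'.congr hradeq.symm, ?_⟩
  rw [integral_congr_ae hradeq, hval', integral_congr_ae haa, integral_congr_ae hbb]
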